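/- Let n be an odd prime and let k, k' be integers with 1 ≤ k ≤ (n−1)/2 and 1 ≤ k' ≤ (n−1)/2. If the ratio cos(πk/n) / cos(πk'/n) is a rational number, then k = k'. -/

import Mathlib

open Polynomial Complex Finset

private lemma lisj_pow_n_eq_neg_one {n : ℕ} (hn : 0 < n) {c : ℂ}
    (hc : IsPrimitiveRoot c (2 * n)) : c ^ n = -1 := by
  have h2 : (c ^ n) ^ 2 = 1 := by
    rw [← pow_mul, mul_comm]; exact hc.pow_eq_one
  have h1 : c ^ n ≠ 1 := hc.pow_ne_one_of_pos_of_lt hn.ne' (by omega)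
  have hfac : (c ^ n - 1) * (c ^ n + 1) = 0 := by linear_combination h2
  rcases mul_eq_zero.mp hfac with h | h
  · exact absurd (by linear_combination h) h1
  · linear_combination h

private lemma lisj_prod_mu {n : ℕ} (hp : n.Prime) (hodd : Odd n) :
    (∏ μ ∈ primitiveRoots (2 * n) ℂ, μ) = 1 := by
  have hn2 : 2 ≤ n := hp.two_le
  obtain ⟨ζ, hζ⟩ : ∃ ζ : ℂ, IsPrimitiveRoot ζ (2 * n) :=
    ⟨_, Complex.isPrimitiveRoot_exp (2 * n) (by omega)⟩
  have hcyc := cyclotomic_eq_prod_X_sub_primitiveRoots hζ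
  have hcard : (primitiveRoots (2 * n) ℂ).card = n - 1 := by
    rw [hζ.card_primitiveRoots, Nat.totient_mul (Nat.coprime_two_left.mpr hodd),
      Nat.totient_two, Nat.totient_prime hp, one_mul]
  have heval : (cyclotomic (2 * n) ℂ).eval 0 = 1 := by
    rw [← coeff_zero_eq_eval_zero, cyclotomic_coeff_zero ℂ (by omega)]
  rw [hcyc, eval_prod] at heval
  simp only [eval_sub, eval_X, eval_C, zero_sub] at heval
  have hneg : ∏ μ ∈ primitiveRoots (2 * n) ℂ, (-μ)
      = (-1 : ℂ) ^ ((primitiveRoots (2 * n) ℂ).card) * ∏ μ ∈ primitiveRoots (2 * n) ℂ, μ := by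
    rw [← Finset.prod_const, ← Finset.prod_mul_distrib]
    exact Finset.prod_congr rfl fun x _ => by ring
  have heven : Even (n - 1) := by
    obtain ⟨t, ht⟩ := hodd; exact ⟨t, by omega⟩
  rw [hneg, hcard, heven.neg_one_pow, one_mul] at heval
  exact heval

private lemma lisj_prod_one_add {n m : ℕ} (hp : n.Prime) (hodd : Odd n)
    (hm0 : 0 < m) (hmn : m < n) :
    (∏ μ ∈ primitiveRoots (2 * n) ℂ, (1 + μ ^ (2 * m))) = 1 := by
  have hn2 : 2 ≤ n := hp.two_le
  have hn0 : (0:ℕ) < n := by omega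
  have h2n : (0:ℕ) < 2 * n := by omega
  obtain ⟨ζ, hζ⟩ : ∃ ζ : ℂ, IsPrimitiveRoot ζ (2 * n) :=
    ⟨_, Complex.isPrimitiveRoot_exp (2 * n) (by omega)⟩
  have hη : IsPrimitiveRoot (ζ ^ 2) n := hζ.pow h2n rfl
  have hcop : Nat.Coprime m n :=
    (hp.coprime_iff_not_dvd.mpr (fun hdvd => absurd (Nat.le_of_dvd hm0 hdvd) (by omega))).symm
  have heven : Even (n - 1) := by
    obtain ⟨t, ht⟩ := hodd; exact ⟨t, by omega⟩
  have hcardS : (primitiveRoots (2 * n) ℂ).card = n - 1 := by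
    rw [hζ.card_primitiveRoots, Nat.totient_mul (Nat.coprime_two_left.mpr hodd),
      Nat.totient_two, Nat.totient_prime hp, one_mul]
  have hcardT : (primitiveRoots n ℂ).card = n - 1 := by
    rw [hη.card_primitiveRoots, Nat.totient_prime hp]
  have hmaps : ∀ μ ∈ primitiveRoots (2 * n) ℂ,
      μ ^ (2 * m) ∈ primitiveRoots n ℂ := by
    intro μ hμ
    have hμ' : IsPrimitiveRoot μ (2 * n) := (mem_primitiveRoots h2n).mp hμ
    have : IsPrimitiveRoot ((μ ^ 2) ^ m) n := (hμ'.pow h2n rfl).pow_of_coprime m hcop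
    rw [← pow_mul] at this
    exact (mem_primitiveRoots hn0).mpr this
  have hinj : ∀ a ∈ primitiveRoots (2 * n) ℂ, ∀ b ∈ primitiveRoots (2 * n) ℂ,
      a ^ (2 * m) = b ^ (2 * m) → a = b := by
    intro a ha b hb hab
    have hA : IsPrimitiveRoot a (2 * n) := (mem_primitiveRoots h2n).mp ha
    have hB : IsPrimitiveRoot b (2 * n) := (mem_primitiveRoots h2n).mp hb
    have hb0 : b ≠ 0 := hB.ne_zero (by omega)
    set x : ℂ := a / b with hx
    have hx2m : x ^ (2 * m) = 1 := by
      rw [hx, div_pow, hab, div_self (pow_ne_zero _ hb0)]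
    have hx2n : x ^ (2 * n) = 1 := by
      rw [hx, div_pow, hA.pow_eq_one, hB.pow_eq_one, div_one]
    have hord : orderOf x ∣ 2 := by
      have h1 := orderOf_dvd_of_pow_eq_one hx2m
      have h2 := orderOf_dvd_of_pow_eq_one hx2n
      have hg := Nat.dvd_gcd h1 h2
      rwa [Nat.gcd_mul_left, Nat.Coprime.gcd_eq_one hcop, mul_one] at hg
    have hx2 : x ^ 2 = 1 := orderOf_dvd_iff_pow_eq_one.mp hord
    have hfac : (x - 1) * (x + 1) = 0 := by linear_combination hx2
    rcases mul_eq_zero.mp hfac with hc | hc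
    · have : x = 1 := by linear_combination hc
      field_simp [hx] at this
      rw [hx, div_eq_one_iff_eq hb0] at this
      exact this
    · exfalso
      have hxneg : a = -b := by
        have : x = -1 := by linear_combination hc
        field_simp [hx] at this
        rw [hx, div_eq_iff hb0] at this
        linear_combination this
      have han : a ^ n = -1 := lisj_pow_n_eq_neg_one hn0 hA
      have hbn : b ^ n = -1 := lisj_pow_n_eq_neg_one hn0 hB
      rw [hxneg, hodd.neg_pow, hbn, neg_neg] at han
      exact absurd han (by norm_num)
  have himg : (primitiveRoots (2 * n) ℂ).image (fun μ => μ ^ (2 * m))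
      = primitiveRoots n ℂ := by
    apply Finset.eq_of_subset_of_card_le
    · intro x hx
      obtain ⟨μ, hμ, rfl⟩ := Finset.mem_image.mp hx
      exact hmaps μ hμ
    · rw [Finset.card_image_of_injOn (fun a ha b hb => hinj a ha b hb), hcardS, hcardT]
  haveI : Fact n.Prime := ⟨hp⟩
  have hT : (∏ η ∈ primitiveRoots n ℂ, (1 + η)) = 1 := by
    have hcyc := cyclotomic_eq_prod_X_sub_primitiveRoots hη
    have heval : (cyclotomic n ℂ).eval (-1) = 1 := by
      rw [cyclotomic_prime ℂ n]
      simp only [eval_finset_sum, eval_pow, eval_X]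
      rw [neg_one_geom_sum, if_neg (Nat.not_even_iff_odd.mpr hodd)]
    rw [hcyc, eval_prod] at heval
    simp only [eval_sub, eval_X, eval_C] at heval
    have hneg : ∏ η ∈ primitiveRoots n ℂ, ((-1 : ℂ) - η)
        = (-1 : ℂ) ^ ((primitiveRoots n ℂ).card) * ∏ η ∈ primitiveRoots n ℂ, (1 + η) := by
      rw [← Finset.prod_const, ← Finset.prod_mul_distrib]
      exact Finset.prod_congr rfl fun x _ => by ring
    rw [hneg, hcardT, heven.neg_one_pow, one_mul] at heval
    exact heval
  calc (∏ μ ∈ primitiveRoots (2 * n) ℂ, (1 + μ ^ (2 * m)))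
      = ∏ x ∈ (primitiveRoots (2 * n) ℂ).image (fun μ => μ ^ (2 * m)), (1 + x) :=
        (Finset.prod_image hinj).symm
    _ = ∏ η ∈ primitiveRoots n ℂ, (1 + η) := by rw [himg]
    _ = 1 := hT

/-- For an odd prime `n` and `1 ≤ k, k' ≤ (n−1)/2`, if `cos(πk/n) / cos(πk'/n)` is
rational then `k = k'`. -/
theorem lissajous_stmt9 (n : ℕ) (hp : n.Prime) (hodd : Odd n) (k k' : ℕ)
    (hk1 : 1 ≤ k) (hk2 : k ≤ (n - 1) / 2) (hk'1 : 1 ≤ k') (hk'2 : k' ≤ (n - 1) / 2)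
    (q : ℚ) (h : Real.cos (Real.pi * k / n) / Real.cos (Real.pi * k' / n) = (q : ℝ)) :
    k = k' := by
  have hn2 : 2 ≤ n := hp.two_le
  have hn3 : 3 ≤ n := by
    rcases Nat.lt_or_ge n 3 with h3 | h3
    · interval_cases n
      exact absurd hodd (by decide)
    · exact h3
  have hkn : 2 * k < n := by omega
  have hk'n : 2 * k' < n := by omega
  have hnR : (0:ℝ) < n := by positivity
  have hcosA : 0 < Real.cos (Real.pi * k / n) := by
    apply Real.cos_pos_of_mem_Ioo
    constructor
    · have : (0:ℝ) ≤ Real.pi * k / n := by positivity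
      linarith [Real.pi_pos]
    · rw [div_lt_iff₀ hnR]
      have hk2' : (2 * k : ℝ) < n := by exact_mod_cast hkn
      nlinarith [Real.pi_pos]
  have hcosB : 0 < Real.cos (Real.pi * k' / n) := by
    apply Real.cos_pos_of_mem_Ioo
    constructor
    · have : (0:ℝ) ≤ Real.pi * k' / n := by positivity
      linarith [Real.pi_pos]
    · rw [div_lt_iff₀ hnR]
      have hk2' : (2 * k' : ℝ) < n := by exact_mod_cast hk'n
      nlinarith [Real.pi_pos]
  have hrel : Real.cos (Real.pi * k / n) = q * Real.cos (Real.pi * k' / n) := by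
    field_simp at h
    linarith [h]
  have hqpos : 0 < q := by
    have : (0:ℝ) < q := by
      rw [← h]; exact div_pos hcosA hcosB
    exact_mod_cast this
  set N := 2 * n with hN
  have hN0 : (N:ℕ) ≠ 0 := by omega
  set ζ : ℂ := Complex.exp (2 * Real.pi * Complex.I / N) with hζdef
  have hζ : IsPrimitiveRoot ζ N := Complex.isPrimitiveRoot_exp N hN0
  have hζpow : ∀ j : ℕ, ζ ^ j = Complex.exp ((Real.pi * j / n : ℝ) * Complex.I) := by
    intro j
    rw [hζdef, ← Complex.exp_nat_mul]
    congr 1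
    have hNc : (N:ℂ) = 2 * n := by rw [hN]; push_cast; ring
    rw [hNc]
    have hnC : (n:ℂ) ≠ 0 := by exact_mod_cast hnR.ne'
    push_cast
    field_simp
  have hζ0 : ζ ≠ 0 := hζ.ne_zero hN0
  have hu : ζ ^ k ≠ 0 := pow_ne_zero _ hζ0
  have hv : ζ ^ k' ≠ 0 := pow_ne_zero _ hζ0
  have hA' : (Real.cos (Real.pi * k / n) : ℂ) = (ζ ^ k + (ζ ^ k)⁻¹) / 2 := by
    rw [Complex.ofReal_cos, Complex.cos, hζpow k, ← Complex.exp_neg]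
    rw [neg_mul]
  have hB' : (Real.cos (Real.pi * k' / n) : ℂ) = (ζ ^ k' + (ζ ^ k')⁻¹) / 2 := by
    rw [Complex.ofReal_cos, Complex.cos, hζpow k', ← Complex.exp_neg]
    rw [neg_mul]
  have hrelC : ζ ^ k + (ζ ^ k)⁻¹ = (q:ℂ) * (ζ ^ k' + (ζ ^ k')⁻¹) := by
    have hcast := congrArg (fun r : ℝ => (r : ℂ)) hrel
    simp only [Complex.ofReal_mul] at hcast
    rw [hA', hB'] at hcast
    push_cast at hcast
    linear_combination 2 * hcast
  have hceq : ζ ^ (2*k+k') + ζ ^ k' = (q:ℂ) * ζ ^ (k+2*k') + (q:ℂ) * ζ ^ k := by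
    have hiu : ζ^k * (ζ^k)⁻¹ = 1 := mul_inv_cancel₀ hu
    have hiv : ζ^k' * (ζ^k')⁻¹ = 1 := mul_inv_cancel₀ hv
    have e1 : ζ^(2*k+k') = ζ^k * ζ^k * ζ^k' := by
      rw [show 2*k+k' = k+k+k' by ring, pow_add, pow_add]
    have e2 : ζ^(k+2*k') = ζ^k * ζ^k' * ζ^k' := by
      rw [show k+2*k' = k+k'+k' by ring, pow_add, pow_add]
    rw [e1, e2]
    linear_combination (ζ^k*ζ^k') * hrelC - ζ^k' * hiu + (q:ℂ)*ζ^k * hiv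
  set f : Polynomial ℚ := X^(2*k+k') + X^k' - C q * X^(k+2*k') - C q * X^k with hf
  have haev : Polynomial.aeval ζ f = 0 := by
    simp only [hf, map_sub, map_add, map_pow, map_mul, aeval_X, aeval_C]
    rw [eq_ratCast (algebraMap ℚ ℂ) q]
    linear_combination hceq
  have hdvd : cyclotomic N ℚ ∣ f := by
    rw [cyclotomic_eq_minpoly_rat hζ (by omega)]
    exact minpoly.dvd ℚ ζ haev
  have hdvdC : cyclotomic N ℂ ∣ f.map (algebraMap ℚ ℂ) := by
    have := Polynomial.map_dvd (algebraMap ℚ ℂ) hdvd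
    rwa [map_cyclotomic] at this
  have hroot : ∀ μ ∈ primitiveRoots N ℂ,
      μ^(2*k+k') + μ^k' = (q:ℂ) * (μ^(k+2*k') + μ^k) := by
    intro μ hμ
    have hμ' : IsPrimitiveRoot μ N := (mem_primitiveRoots (by omega)).mp hμ
    obtain ⟨g, hg⟩ := hdvdC
    have h0 : (f.map (algebraMap ℚ ℂ)).eval μ = 0 := by
      rw [hg, eval_mul]
      have : (cyclotomic N ℂ).eval μ = 0 := (hμ'.isRoot_cyclotomic (by omega))
      rw [this, zero_mul]
    simp only [hf, Polynomial.map_sub, Polynomial.map_add, Polynomial.map_pow,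
      Polynomial.map_mul, map_X, map_C, eval_sub, eval_add, eval_pow, eval_X,
      eval_mul, eval_C, eq_ratCast] at h0
    linear_combination h0
  have hcardS : (primitiveRoots N ℂ).card = n - 1 := by
    rw [hζ.card_primitiveRoots, hN, Nat.totient_mul (Nat.coprime_two_left.mpr hodd),
      Nat.totient_two, Nat.totient_prime hp, one_mul]
  have hPL : (∏ μ ∈ primitiveRoots N ℂ, (μ^(2*k+k') + μ^k')) = 1 := by
    have hptw : ∀ μ ∈ primitiveRoots N ℂ, μ^(2*k+k') + μ^k' = μ^k' * (1 + μ^(2*k)) := by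
      intro μ _
      rw [pow_add, mul_add, mul_one, mul_comm]
      ring
    rw [Finset.prod_congr rfl hptw, Finset.prod_mul_distrib, Finset.prod_pow, hN,
      lisj_prod_mu hp hodd, one_pow, one_mul]
    exact lisj_prod_one_add hp hodd (by omega) (by omega)
  have hPR : (∏ μ ∈ primitiveRoots N ℂ, (μ^(k+2*k') + μ^k)) = 1 := by
    have hptw : ∀ μ ∈ primitiveRoots N ℂ, μ^(k+2*k') + μ^k = μ^k * (1 + μ^(2*k')) := by
      intro μ _
      rw [pow_add, mul_add, mul_one]
      ring
    rw [Finset.prod_congr rfl hptw, Finset.prod_mul_distrib, Finset.prod_pow, hN,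
      lisj_prod_mu hp hodd, one_pow, one_mul]
    exact lisj_prod_one_add hp hodd (by omega) (by omega)
  have hq_pow : (q:ℂ) ^ (n-1) = 1 := by
    have h1 : (∏ μ ∈ primitiveRoots N ℂ, (μ^(2*k+k') + μ^k'))
        = ∏ μ ∈ primitiveRoots N ℂ, ((q:ℂ) * (μ^(k+2*k') + μ^k)) :=
      Finset.prod_congr rfl hroot
    rw [hPL, Finset.prod_mul_distrib, Finset.prod_const, hPR, mul_one, hcardS] at h1
    exact h1.symm
  have hq1 : q = 1 := by
    have hq_pow' : q ^ (n-1) = 1 := by exact_mod_cast hq_pow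
    rcases lt_trichotomy q 1 with hlt | heq | hgt
    · exfalso
      have : q ^ (n-1) < 1 := pow_lt_one₀ (le_of_lt hqpos) hlt (by omega)
      rw [hq_pow'] at this; exact lt_irrefl 1 this
    · exact heq
    · exfalso
      have : 1 < q ^ (n-1) := one_lt_pow₀ hgt (by omega)
      rw [hq_pow'] at this; exact lt_irrefl 1 this
  have hcos_eq : Real.cos (Real.pi * k / n) = Real.cos (Real.pi * k' / n) := by
    rw [hrel, hq1]
    push_cast
    ring
  have hmem1 : Real.pi * k / n ∈ Set.Icc 0 Real.pi := by
    constructor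
    · positivity
    · rw [div_le_iff₀ hnR]
      have : (k:ℝ) ≤ n := by exact_mod_cast (by omega : k ≤ n)
      nlinarith [Real.pi_pos]
  have hmem2 : Real.pi * k' / n ∈ Set.Icc 0 Real.pi := by
    constructor
    · positivity
    · rw [div_le_iff₀ hnR]
      have : (k':ℝ) ≤ n := by exact_mod_cast (by omega : k' ≤ n)
      nlinarith [Real.pi_pos]
  have heqangle := Real.injOn_cos hmem1 hmem2 hcos_eq
  field_simp at heqangle
  exact_mod_cast heqangle
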